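/- For every t > 0 and every x > 0, y > 0, lim_{ξ→0⁺} Q_ξ(t,y|x) = (2πt)^{−1/2}·(e^{−(x−y)²/(2t)} − e^{−(x+y)²/(2t)}), the transition density of one-dimensional Brownian motion absorbed at the origin. -/

import Mathlib

open MeasureTheory Filter Topology

/-- Macdonald function of order zero: `K₀(z) = ∫_0^∞ e^{-z cosh u} du`. -/
noncomputable def K0 (z : ℝ) : ℝ := ∫ u in Set.Ioi (0:ℝ), Real.exp (-(z * Real.cosh u))

/-- Macdonald function of imaginary order: `K_{ik}(z) = ∫_0^∞ e^{-z cosh u} cos(ku) du`. -/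
noncomputable def Kik (k z : ℝ) : ℝ :=
  ∫ u in Set.Ioi (0:ℝ), Real.exp (-(z * Real.cosh u)) * Real.cos (k * u)

/-- Transition probability density `Q_ξ(t,y|x)` of the ξ-killing Brownian motion. -/
noncomputable def Qxi (ξ t y x : ℝ) : ℝ :=
  (1 / Real.pi ^ 2) *
    ∫ k : ℝ, Real.exp (-(k ^ 2 * t) / 2) * Kik (ξ * k) (Real.exp (-(x / ξ)))
      * Kik (ξ * k) (Real.exp (-(y / ξ))) * (ξ * k * Real.sinh (Real.pi * ξ * k))

/-- Survival probability `N_ξ(T,x) = ∫_ℝ Q_ξ(T,y|x) dy`. -/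
noncomputable def Nxi (ξ T x : ℝ) : ℝ := ∫ y : ℝ, Qxi ξ T y x

open Real Set

section Aux

lemma integrableOn_exp_neg_cosh {z : ℝ} (hz : 0 < z) :
    IntegrableOn (fun u : ℝ => Real.exp (-(z * Real.cosh u))) (Set.Ioi 0) := by
  have h : IntegrableOn (fun u : ℝ => Real.exp (-(z/2)) * Real.exp (-(z/2) * u)) (Set.Ioi 0) :=
    (exp_neg_integrableOn_Ioi 0 (half_pos hz)).const_mul _
  refine h.mono' ?_ ?_
  · exact (Real.continuous_exp.comp
      (continuous_const.mul Real.continuous_cosh).neg).aestronglyMeasurable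
  · filter_upwards [ae_restrict_mem measurableSet_Ioi] with u hu
    have h1 : (1 + u) / 2 ≤ Real.cosh u := by
      rw [Real.cosh_eq]
      have := Real.add_one_le_exp u
      have := (Real.exp_pos (-u)).le
      linarith
    have h2 : -(z * Real.cosh u) ≤ -(z/2) + -(z/2) * u := by nlinarith
    rw [Real.norm_eq_abs, abs_of_pos (Real.exp_pos _), ← Real.exp_add]
    exact Real.exp_le_exp.2 h2

lemma continuous_Kik {z : ℝ} (hz : 0 < z) : Continuous fun c : ℝ => Kik c z := by
  refine continuous_of_dominated ?_ ?_ (integrableOn_exp_neg_cosh hz) ?_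
  · intro c
    exact ((Real.continuous_exp.comp
      (continuous_const.mul Real.continuous_cosh).neg).mul
      (Real.continuous_cos.comp (continuous_const.mul continuous_id))).aestronglyMeasurable
  · intro c
    filter_upwards with u
    rw [Real.norm_eq_abs, abs_mul, abs_of_pos (Real.exp_pos _)]
    calc Real.exp (-(z * Real.cosh u)) * |Real.cos (c * u)|
        ≤ Real.exp (-(z * Real.cosh u)) * 1 :=
          mul_le_mul_of_nonneg_left (Real.abs_cos_le_one _) (Real.exp_pos _).le
      _ = Real.exp (-(z * Real.cosh u)) := mul_one _
  · filter_upwards with u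
    exact continuous_const.mul (Real.continuous_cos.comp (continuous_mul_right u))


lemma Kik_scaled {ξ k x : ℝ} (hξ : 0 < ξ) :
    ξ * Kik (ξ * k) (Real.exp (-(x/ξ))) =
      ∫ s in Set.Ioi (0:ℝ),
        Real.exp (-(Real.exp (-(x/ξ)) * Real.cosh (s/ξ))) * Real.cos (k*s) := by
  have h := integral_comp_mul_left_Ioi
    (fun u => Real.exp (-(Real.exp (-(x/ξ)) * Real.cosh u)) * Real.cos (ξ*k*u)) 0
    (inv_pos.2 hξ)
  simp only [mul_zero, inv_inv, smul_eq_mul] at h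
  rw [Kik, ← h]
  refine setIntegral_congr_fun measurableSet_Ioi (fun s hs => ?_)
  have h1 : ξ⁻¹ * s = s / ξ := by field_simp
  rw [h1, show ξ * k * (s/ξ) = k * s by field_simp]

lemma abs_sinh_le (w : ℝ) : |Real.sinh w| ≤ |w| * Real.exp |w| := by
  rw [Real.abs_sinh]
  set v := |w| with hv
  have hv0 : 0 ≤ v := abs_nonneg w
  have hm : Real.exp (-v) = Real.exp v * Real.exp (-(2*v)) := by
    rw [← Real.exp_add]; ring_nf
  rw [Real.sinh_eq]
  nlinarith [Real.add_one_le_exp (-(2*v)), Real.exp_pos v]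

lemma bound_pt {ξ x s : ℝ} (hξ : 0 < ξ) (hξ1 : ξ ≤ 1) (k : ℝ) :
    ‖Real.exp (-(Real.exp (-(x/ξ)) * Real.cosh (s/ξ))) * Real.cos (k*s)‖ ≤
      min 1 (Real.exp ((x - s)/2)) := by
  have hz : (0:ℝ) < Real.exp (-(x/ξ)) := Real.exp_pos _
  have habs : ‖Real.exp (-(Real.exp (-(x/ξ)) * Real.cosh (s/ξ))) * Real.cos (k*s)‖ ≤
      Real.exp (-(Real.exp (-(x/ξ)) * Real.cosh (s/ξ))) := by
    rw [Real.norm_eq_abs, abs_mul, abs_of_pos (Real.exp_pos _)]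
    calc _ ≤ Real.exp (-(Real.exp (-(x/ξ)) * Real.cosh (s/ξ))) * 1 :=
          mul_le_mul_of_nonneg_left (Real.abs_cos_le_one _) (Real.exp_pos _).le
      _ = _ := mul_one _
  have hle1 : Real.exp (-(Real.exp (-(x/ξ)) * Real.cosh (s/ξ))) ≤ 1 := by
    rw [Real.exp_le_one_iff]
    have := Real.cosh_pos (x := s/ξ)
    nlinarith
  refine le_min (habs.trans hle1) ?_
  rcases le_or_gt s x with hsx | hsx
  · exact (habs.trans hle1).trans (Real.one_le_exp (by linarith))
  · refine habs.trans (Real.exp_le_exp.2 ?_)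
    have hcosh : Real.exp (s/ξ) / 2 ≤ Real.cosh (s/ξ) := by
      rw [Real.cosh_eq]
      have := (Real.exp_pos (-(s/ξ))).le
      linarith
    have hmul : Real.exp ((s-x)/ξ) / 2 ≤ Real.exp (-(x/ξ)) * Real.cosh (s/ξ) := by
      have h3 : Real.exp (-(x/ξ)) * (Real.exp (s/ξ) / 2) = Real.exp ((s-x)/ξ) / 2 := by
        rw [mul_div_assoc', ← Real.exp_add]
        congr 2
        field_simp
        ring
      calc Real.exp ((s-x)/ξ) / 2 = Real.exp (-(x/ξ)) * (Real.exp (s/ξ) / 2) := h3.symm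
        _ ≤ _ := mul_le_mul_of_nonneg_left hcosh hz.le
    have hdiv : s - x ≤ (s - x)/ξ := by
      rw [le_div_iff₀ hξ]
      nlinarith
    have hexp : 1 + (s - x) ≤ Real.exp ((s-x)/ξ) := by
      have := Real.add_one_le_exp (s-x)
      have := Real.exp_le_exp.2 hdiv
      linarith
    linarith

lemma bound_integrable (x : ℝ) :
    IntegrableOn (fun s : ℝ => min 1 (Real.exp ((x - s)/2))) (Set.Ioi 0) := by
  have h : IntegrableOn (fun s : ℝ => Real.exp (x/2) * Real.exp (-(1/2) * s)) (Set.Ioi 0) :=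
    (exp_neg_integrableOn_Ioi 0 (by norm_num)).const_mul _
  refine h.mono' ?_ ?_
  · exact (continuous_const.min (Real.continuous_exp.comp
      (by continuity))).aestronglyMeasurable
  · filter_upwards with s
    have h1 : (0:ℝ) < Real.exp ((x - s)/2) := Real.exp_pos _
    have h2 : min 1 (Real.exp ((x - s)/2)) ≤ Real.exp ((x - s)/2) := min_le_right _ _
    have h3 : Real.exp (x/2) * Real.exp (-(1/2) * s) = Real.exp ((x - s)/2) := by
      rw [← Real.exp_add]; ring_nf
    rw [Real.norm_eq_abs, abs_of_pos (lt_min one_pos h1), h3]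
    exact h2


lemma ae_ne_real (x : ℝ) : ∀ᵐ s : ℝ ∂(volume : Measure ℝ), s ≠ x := by
  rw [ae_iff]
  have h : {a : ℝ | ¬ a ≠ x} = {x} := by ext a; simp
  rw [h]
  exact measure_singleton x

lemma tendsto_scaledKik {x : ℝ} (hx : 0 < x) (k : ℝ) :
    Tendsto (fun ξ : ℝ => ξ * Kik (ξ*k) (Real.exp (-(x/ξ)))) (𝓝[>] (0:ℝ))
      (𝓝 (∫ s in Set.Ioo (0:ℝ) x, Real.cos (k*s))) := by
  have hcong : (fun ξ : ℝ => ξ * Kik (ξ*k) (Real.exp (-(x/ξ)))) =ᶠ[𝓝[>] (0:ℝ)]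
      fun ξ => ∫ s in Set.Ioi (0:ℝ),
        Real.exp (-(Real.exp (-(x/ξ)) * Real.cosh (s/ξ))) * Real.cos (k*s) := by
    filter_upwards [self_mem_nhdsWithin] with ξ hξ
    exact Kik_scaled hξ
  rw [tendsto_congr' hcong]
  have htarget : ∫ s in Set.Ioo (0:ℝ) x, Real.cos (k*s)
      = ∫ s in Set.Ioi (0:ℝ), (Set.Iio x).indicator (fun s => Real.cos (k*s)) s := by
    rw [setIntegral_indicator measurableSet_Iio, Set.Ioi_inter_Iio]
  rw [htarget]
  refine tendsto_integral_filter_of_dominated_convergence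
    (fun s => min 1 (Real.exp ((x - s)/2))) ?_ ?_ (bound_integrable x) ?_
  · filter_upwards with ξ
    exact ((Real.continuous_exp.comp (continuous_const.mul
      (Real.continuous_cosh.comp (continuous_id.div_const ξ))).neg).mul
      (Real.continuous_cos.comp (continuous_const.mul continuous_id))).aestronglyMeasurable
  · filter_upwards [Ioo_mem_nhdsGT_of_mem (Set.mem_Ico.2 ⟨le_refl (0:ℝ), zero_lt_one⟩)]
      with ξ hξ
    exact Filter.Eventually.of_forall fun s => bound_pt hξ.1 hξ.2.le k
  · filter_upwards [ae_restrict_mem measurableSet_Ioi, ae_restrict_of_ae (ae_ne_real x)]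
      with s hs hne
    have hs' : (0:ℝ) < s := hs
    have hE : ∀ ξ : ℝ, Real.exp (-(x/ξ)) * Real.cosh (s/ξ)
        = (Real.exp ((s-x)/ξ) + Real.exp (-((s+x)/ξ)))/2 := by
      intro ξ
      have e1 : Real.exp (-(x/ξ)) * Real.exp (s/ξ) = Real.exp ((s-x)/ξ) := by
        rw [← Real.exp_add]; congr 1; rw [sub_div]; ring
      have e2 : Real.exp (-(x/ξ)) * Real.exp (-(s/ξ)) = Real.exp (-((s+x)/ξ)) := by
        rw [← Real.exp_add]; congr 1; rw [add_div]; ring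
      rw [Real.cosh_eq]
      calc Real.exp (-(x/ξ)) * ((Real.exp (s/ξ) + Real.exp (-(s/ξ)))/2)
          = (Real.exp (-(x/ξ)) * Real.exp (s/ξ) + Real.exp (-(x/ξ)) * Real.exp (-(s/ξ)))/2 := by
            ring
        _ = _ := by rw [e1, e2]
    rcases lt_or_gt_of_ne hne with hsx | hsx
    · rw [Set.indicator_of_mem (Set.mem_Iio.2 hsx)]
      have l1 : Tendsto (fun ξ : ℝ => Real.exp ((s-x)/ξ)) (𝓝[>] (0:ℝ)) (𝓝 0) := by
        have h1 : Tendsto (fun ξ : ℝ => (x-s)/ξ) (𝓝[>] (0:ℝ)) atTop := by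
          simpa [div_eq_mul_inv] using tendsto_inv_nhdsGT_zero.const_mul_atTop (by linarith : (0:ℝ) < x - s)
        have h2 : Tendsto (fun ξ : ℝ => Real.exp ((x-s)/ξ)) (𝓝[>] (0:ℝ)) atTop :=
          Real.tendsto_exp_atTop.comp h1
        refine h2.inv_tendsto_atTop.congr fun ξ => ?_
        show (Real.exp ((x-s)/ξ))⁻¹ = _
        rw [← Real.exp_neg]; congr 1; rw [← neg_div, neg_sub]
      have l2 : Tendsto (fun ξ : ℝ => Real.exp (-((s+x)/ξ))) (𝓝[>] (0:ℝ)) (𝓝 0) := by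
        have h1 : Tendsto (fun ξ : ℝ => (s+x)/ξ) (𝓝[>] (0:ℝ)) atTop := by
          simpa [div_eq_mul_inv] using tendsto_inv_nhdsGT_zero.const_mul_atTop (by linarith : (0:ℝ) < s + x)
        have h2 : Tendsto (fun ξ : ℝ => Real.exp ((s+x)/ξ)) (𝓝[>] (0:ℝ)) atTop :=
          Real.tendsto_exp_atTop.comp h1
        refine h2.inv_tendsto_atTop.congr fun ξ => ?_
        show (Real.exp ((s+x)/ξ))⁻¹ = _
        rw [← Real.exp_neg]
      have lE : Tendsto (fun ξ : ℝ => Real.exp (-(x/ξ)) * Real.cosh (s/ξ)) (𝓝[>] (0:ℝ)) (𝓝 0) := by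
        refine Tendsto.congr (fun ξ => (hE ξ).symm) ?_
        have := (l1.add l2).div_const 2
        simpa using this
      have lE' := lE.neg
      rw [neg_zero] at lE'
      have := ((Real.continuous_exp.tendsto 0).comp lE').mul_const (Real.cos (k*s))
      simpa using this
    · rw [Set.indicator_of_notMem (by simp [Set.mem_Iio]; linarith)]
      have hEb : ∀ ξ : ℝ, Real.exp ((s-x)/ξ)/2 ≤ Real.exp (-(x/ξ)) * Real.cosh (s/ξ) := by
        intro ξ
        rw [hE ξ]
        have := (Real.exp_pos (-((s+x)/ξ))).le
        linarith
      have hA : Tendsto (fun ξ : ℝ => Real.exp ((s-x)/ξ)/2) (𝓝[>] (0:ℝ)) atTop := by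
        have h1 : Tendsto (fun ξ : ℝ => (s-x)/ξ) (𝓝[>] (0:ℝ)) atTop := by
          simpa [div_eq_mul_inv] using tendsto_inv_nhdsGT_zero.const_mul_atTop (by linarith : (0:ℝ) < s - x)
        exact (Real.tendsto_exp_atTop.comp h1).atTop_div_const (by norm_num)
      have hEtop : Tendsto (fun ξ : ℝ => Real.exp (-(x/ξ)) * Real.cosh (s/ξ)) (𝓝[>] (0:ℝ)) atTop :=
        tendsto_atTop_mono hEb hA
      refine squeeze_zero_norm (fun ξ => ?_) (Real.tendsto_exp_atBot.comp (tendsto_neg_atTop_atBot.comp hEtop))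
      rw [Real.norm_eq_abs, abs_mul, abs_of_pos (Real.exp_pos _)]
      calc _ ≤ Real.exp (-(Real.exp (-(x/ξ)) * Real.cosh (s/ξ))) * 1 :=
            mul_le_mul_of_nonneg_left (Real.abs_cos_le_one _) (Real.exp_pos _).le
        _ = _ := mul_one _

lemma integral_Ioo_cos {x k : ℝ} (hx : 0 < x) (hk : k ≠ 0) :
    ∫ s in Set.Ioo (0:ℝ) x, Real.cos (k*s) = Real.sin (k*x)/k := by
  rw [← integral_Ioc_eq_integral_Ioo, ← intervalIntegral.integral_of_le hx.le,
    intervalIntegral.integral_comp_mul_left (fun u => Real.cos u) hk,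
    integral_cos]
  simp [div_eq_inv_mul]

lemma tendsto_sinh_div (c : ℝ) :
    Tendsto (fun ξ : ℝ => Real.sinh (c*ξ) / ξ) (𝓝[>] (0:ℝ)) (𝓝 c) := by
  have h' : HasDerivAt (fun ξ : ℝ => c * ξ) c 0 := by
    simpa using (hasDerivAt_id (0:ℝ)).const_mul c
  have h : HasDerivAt (fun ξ : ℝ => Real.sinh (c*ξ)) (Real.cosh (c*0) * c) 0 :=
    (Real.hasDerivAt_sinh (c*0)).comp 0 h'
  have h2 := hasDerivAt_iff_tendsto_slope.mp h
  have h3 : Tendsto (fun ξ : ℝ => Real.sinh (c*ξ)/ξ) (𝓝[≠] (0:ℝ)) (𝓝 (Real.cosh (c*0) * c)) := by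
    refine h2.congr fun ξ => ?_
    simp [slope_def_field]
  rw [show Real.cosh (c*0) * c = c by simp] at h3
  exact h3.mono_left (nhdsWithin_mono 0 (fun ξ hξ => ne_of_gt hξ))


lemma integrable_gauss_cos {t : ℝ} (ht : 0 < t) (c : ℝ) :
    Integrable (fun k : ℝ => Real.exp (-(k^2*t)/2) * Real.cos (k*c)) := by
  refine (integrable_exp_neg_mul_sq (half_pos ht)).mono' ?_ ?_
  · exact ((Real.continuous_exp.comp (by continuity)).mul
      (Real.continuous_cos.comp (by continuity))).aestronglyMeasurable
  · filter_upwards with k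
    rw [Real.norm_eq_abs, abs_mul, abs_of_pos (Real.exp_pos _)]
    calc _ ≤ Real.exp (-(k^2*t)/2) * 1 :=
          mul_le_mul_of_nonneg_left (Real.abs_cos_le_one _) (Real.exp_pos _).le
      _ = Real.exp (-(t/2) * k^2) := by rw [mul_one]; congr 1; ring

lemma integral_gauss_cos {t : ℝ} (ht : 0 < t) (c : ℝ) :
    ∫ k : ℝ, Real.exp (-(k^2*t)/2) * Real.cos (k*c)
      = Real.sqrt (2*Real.pi/t) * Real.exp (-c^2/(2*t)) := by
  set bc : ℂ := ((-(t/2) : ℝ) : ℂ) with hbc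
  have hb : bc.re < 0 := by
    rw [hbc, Complex.ofReal_re]; linarith
  have key := integral_cexp_quadratic hb ((c:ℂ)*Complex.I) 0
  have hint : Integrable (fun k : ℝ => Complex.exp (bc * (k:ℂ)^2 + ((c:ℂ)*Complex.I)*(k:ℂ) + 0)) :=
    integrable_cexp_quadratic' hb _ _
  have hre : ∫ k : ℝ, Real.exp (-(k^2*t)/2) * Real.cos (k*c)
      = (∫ k : ℝ, Complex.exp (bc * (k:ℂ)^2 + ((c:ℂ)*Complex.I)*(k:ℂ) + 0)).re := by
    have hh := integral_re hint
    simp only [RCLike.re_to_complex] at hh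
    rw [← hh]
    refine integral_congr_ae (Filter.Eventually.of_forall fun k => ?_)
    show Real.exp (-(k^2*t)/2) * Real.cos (k*c)
      = (Complex.exp (bc * (k:ℂ)^2 + ((c:ℂ)*Complex.I)*(k:ℂ) + 0)).re
    rw [Complex.exp_re]
    have h1 : (bc * (k:ℂ)^2 + ((c:ℂ)*Complex.I)*(k:ℂ) + 0).re = -(k^2*t)/2 := by
      simp [hbc, Complex.mul_re, Complex.mul_im, pow_two]
      ring
    have h2 : (bc * (k:ℂ)^2 + ((c:ℂ)*Complex.I)*(k:ℂ) + 0).im = k*c := by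
      simp [hbc, Complex.mul_re, Complex.mul_im, pow_two]
      ring
    rw [h1, h2]
  have hrhs : (↑Real.pi / -bc) ^ (1/2 : ℂ) * Complex.exp (0 - ((c:ℂ)*Complex.I)^2/(4*bc))
      = ((Real.sqrt (2*Real.pi/t) : ℝ) : ℂ) * ((Real.exp (-c^2/(2*t)) : ℝ) : ℂ) := by
    have ht' : (t:ℂ) ≠ 0 := Complex.ofReal_ne_zero.2 ht.ne'
    have e1 : (↑Real.pi / -bc) = ((2*Real.pi/t : ℝ) : ℂ) := by
      rw [hbc]
      push_cast
      field_simp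
    have e2 : ((0:ℂ) - ((c:ℂ)*Complex.I)^2/(4*bc)) = ((-c^2/(2*t) : ℝ) : ℂ) := by
      rw [hbc, mul_pow, Complex.I_sq]
      push_cast
      field_simp
      ring
    rw [e1, e2, Complex.ofReal_exp]
    congr 1
    rw [show (1/2 : ℂ) = ((1/2 : ℝ) : ℂ) by norm_num,
      ← Complex.ofReal_cpow (by positivity) (1/2 : ℝ), ← Real.sqrt_eq_rpow]
  rw [hre, key, hrhs, ← Complex.ofReal_mul, Complex.ofReal_re]


lemma Kik_scaled_norm_le {ξ k x : ℝ} (hξ : 0 < ξ) (hξ1 : ξ ≤ 1) :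
    ‖ξ * Kik (ξ*k) (Real.exp (-(x/ξ)))‖ ≤
      ∫ s in Set.Ioi (0:ℝ), min 1 (Real.exp ((x - s)/2)) := by
  rw [Kik_scaled hξ]
  exact norm_integral_le_of_norm_le (bound_integrable x)
    (Filter.Eventually.of_forall fun s => bound_pt hξ hξ1 k)

lemma integrable_sq_gauss {b : ℝ} (hb : 0 < b) :
    Integrable (fun k : ℝ => k^2 * Real.exp (-b * k^2)) := by
  have h := integrable_rpow_mul_exp_neg_mul_sq hb (show (-1:ℝ) < 2 by norm_num)
  refine h.congr (Filter.Eventually.of_forall fun k => ?_)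
  show k ^ ((2:ℕ):ℝ) * Real.exp (-b * k^2) = _
  rw [Real.rpow_natCast]


lemma norm_prod_bound {t ξ k Cx Cy A B : ℝ} (ht : 0 < t) (hξ0 : 0 < ξ) (hξ1 : ξ ≤ 1)
    (hA : ξ * |A| ≤ Cx) (hB : ξ * |B| ≤ Cy) :
    ‖Real.exp (-(k ^ 2 * t) / 2) * A * B * (ξ * k * Real.sinh (Real.pi * ξ * k))‖ ≤
      (Cx * Cy * Real.pi * Real.exp (Real.pi^2/t)) * (k^2 * Real.exp (-(t/4) * k^2)) := by
  have hπ : (0:ℝ) < Real.pi := Real.pi_pos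
  set S := Real.sinh (Real.pi*ξ*k) with hS'
  have hCx0 : 0 ≤ Cx := le_trans (by positivity) hA
  have hCy0 : 0 ≤ Cy := le_trans (by positivity) hB
  have habsπ : |Real.pi*ξ*k| = Real.pi*ξ* |k| := by
    rw [abs_mul, abs_mul, abs_of_pos hπ, abs_of_pos hξ0]
  have hS : |S| ≤ Real.pi*ξ* |k| * Real.exp (Real.pi* |k|) := by
    have h0 := abs_sinh_le (Real.pi*ξ*k)
    rw [habsπ] at h0
    refine h0.trans (mul_le_mul_of_nonneg_left (Real.exp_le_exp.2 ?_)
      (by positivity))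
    nlinarith [mul_nonneg (mul_nonneg hπ.le (abs_nonneg k)) (by linarith : (0:ℝ) ≤ 1 - ξ)]
  have hSS : ξ*( |k| * |S|) ≤ ξ^2*(Real.pi*k^2*Real.exp (Real.pi* |k|)) := by
    calc ξ*( |k| * |S|)
        ≤ ξ*( |k| *(Real.pi*ξ* |k| * Real.exp (Real.pi* |k|))) := by
          refine mul_le_mul_of_nonneg_left
            (mul_le_mul_of_nonneg_left hS (abs_nonneg k)) hξ0.le
      _ = ξ^2*(Real.pi*( |k| * |k|)*Real.exp (Real.pi* |k|)) := by ring
      _ = ξ^2*(Real.pi*k^2*Real.exp (Real.pi* |k|)) := by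
          rw [abs_mul_abs_self]; ring_nf
  have hEE : Real.exp (-(k^2*t)/2) * Real.exp (Real.pi* |k|)
      ≤ Real.exp (Real.pi^2/t) * Real.exp (-(t/4)*k^2) := by
    rw [← Real.exp_add, ← Real.exp_add]
    apply Real.exp_le_exp.2
    have h2 : Real.pi* |k| ≤ (Real.pi^2 + (t^2/4)*k^2)/t := by
      rw [le_div_iff₀ ht]
      nlinarith [sq_nonneg (t* |k| - 2*Real.pi), sq_abs k]
    have h3 : (Real.pi^2 + (t^2/4)*k^2)/t = Real.pi^2/t + (t/4)*k^2 := by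
      field_simp
    linarith
  have step1 : ‖Real.exp (-(k ^ 2 * t) / 2) * A * B * (ξ * k * S)‖
      = Real.exp (-(k^2*t)/2) * ( |A| *( |B| *(ξ*( |k| * |S|)))) := by
    rw [Real.norm_eq_abs, abs_mul, abs_mul, abs_mul, abs_mul, abs_mul,
      abs_of_pos (Real.exp_pos _), abs_of_pos hξ0]
    ring
  rw [step1]
  calc Real.exp (-(k^2*t)/2) * ( |A| *( |B| *(ξ*( |k| * |S|))))
      ≤ Real.exp (-(k^2*t)/2) *
          ( |A| *( |B| *(ξ^2*(Real.pi*k^2*Real.exp (Real.pi* |k|))))) := by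
        refine mul_le_mul_of_nonneg_left
          (mul_le_mul_of_nonneg_left (mul_le_mul_of_nonneg_left hSS (abs_nonneg _))
            (abs_nonneg _)) (Real.exp_pos _).le
    _ = (ξ* |A|)*((ξ* |B|)*(Real.pi*k^2*Real.exp (Real.pi* |k|)
          *Real.exp (-(k^2*t)/2))) := by ring
    _ ≤ Cx*((ξ* |B|)*(Real.pi*k^2*Real.exp (Real.pi* |k|)
          *Real.exp (-(k^2*t)/2))) := by
        refine mul_le_mul_of_nonneg_right hA ?_
        refine mul_nonneg (mul_nonneg hξ0.le (abs_nonneg _)) (by positivity)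
    _ ≤ Cx*(Cy*(Real.pi*k^2*Real.exp (Real.pi* |k|)*Real.exp (-(k^2*t)/2))) := by
        refine mul_le_mul_of_nonneg_left
          (mul_le_mul_of_nonneg_right hB (by positivity)) hCx0
    _ = (Cx*Cy*Real.pi*k^2) *
          (Real.exp (-(k^2*t)/2) * Real.exp (Real.pi* |k|)) := by ring
    _ ≤ (Cx*Cy*Real.pi*k^2) *
          (Real.exp (Real.pi^2/t) * Real.exp (-(t/4)*k^2)) := by
        refine mul_le_mul_of_nonneg_left hEE (by positivity)
    _ = (Cx * Cy * Real.pi * Real.exp (Real.pi^2/t)) * (k^2 * Real.exp (-(t/4)*k^2)) := by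
        ring

end Aux

set_option maxHeartbeats 1600000 in
/-- As `ξ → 0⁺`, `Q_ξ(t,y|x)` converges to the transition density of Brownian motion
absorbed at the origin. -/
theorem Qxi_xi_to_zero_limit (t : ℝ) (ht : 0 < t) (x y : ℝ) (hx : 0 < x) (hy : 0 < y) :
    Tendsto (fun ξ : ℝ => Qxi ξ t y x) (𝓝[>] 0)
      (𝓝 ((Real.sqrt (2 * Real.pi * t))⁻¹ *
        (Real.exp (-(x - y) ^ 2 / (2 * t)) - Real.exp (-(x + y) ^ 2 / (2 * t))))) := by
  have hπ : (0:ℝ) < Real.pi := Real.pi_pos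
  set Cx := ∫ s in Set.Ioi (0:ℝ), min 1 (Real.exp ((x - s)/2)) with hCxdef
  set Cy := ∫ s in Set.Ioi (0:ℝ), min 1 (Real.exp ((y - s)/2)) with hCydef
  have hCx0 : 0 ≤ Cx :=
    integral_nonneg fun s => le_min (by norm_num) (Real.exp_pos _).le
  have hCy0 : 0 ≤ Cy :=
    integral_nonneg fun s => le_min (by norm_num) (Real.exp_pos _).le
  have hmain : Tendsto (fun ξ : ℝ =>
      ∫ k : ℝ, Real.exp (-(k ^ 2 * t) / 2) * Kik (ξ * k) (Real.exp (-(x / ξ)))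
        * Kik (ξ * k) (Real.exp (-(y / ξ))) * (ξ * k * Real.sinh (Real.pi * ξ * k)))
      (𝓝[>] (0:ℝ))
      (𝓝 (∫ k : ℝ,
        Real.pi * (Real.exp (-(k ^ 2 * t) / 2) * (Real.sin (k*x) * Real.sin (k*y))))) := by
    refine tendsto_integral_filter_of_dominated_convergence
      (fun k => (Cx * Cy * Real.pi * Real.exp (Real.pi^2/t)) * (k^2 * Real.exp (-(t/4) * k^2)))
      ?_ ?_ ?_ ?_
    · filter_upwards [self_mem_nhdsWithin] with ξ hξ
      have hξ' : (0:ℝ) < ξ := hξ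
      have c1 : Continuous fun k : ℝ => Kik (ξ*k) (Real.exp (-(x/ξ))) :=
        (continuous_Kik (Real.exp_pos _)).comp (continuous_const.mul continuous_id)
      have c2 : Continuous fun k : ℝ => Kik (ξ*k) (Real.exp (-(y/ξ))) :=
        (continuous_Kik (Real.exp_pos _)).comp (continuous_const.mul continuous_id)
      exact ((((Real.continuous_exp.comp (by continuity)).mul c1).mul c2).mul
        (by continuity)).aestronglyMeasurable
    · filter_upwards [Ioo_mem_nhdsGT_of_mem (Set.mem_Ico.2 ⟨le_refl (0:ℝ), zero_lt_one⟩)]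
        with ξ hξ
      refine Filter.Eventually.of_forall fun k => ?_
      have hξ0 : (0:ℝ) < ξ := hξ.1
      have hξ1 : ξ ≤ 1 := hξ.2.le
      have hA : ξ * |Kik (ξ*k) (Real.exp (-(x/ξ)))| ≤ Cx := by
        have := Kik_scaled_norm_le (k := k) (x := x) hξ0 hξ1
        rw [Real.norm_eq_abs, abs_mul, abs_of_pos hξ0] at this
        exact this
      have hB : ξ * |Kik (ξ*k) (Real.exp (-(y/ξ)))| ≤ Cy := by
        have := Kik_scaled_norm_le (k := k) (x := y) hξ0 hξ1
        rw [Real.norm_eq_abs, abs_mul, abs_of_pos hξ0] at this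
        exact this
      exact norm_prod_bound ht hξ0 hξ1 hA hB
    · exact (integrable_sq_gauss (by positivity : (0:ℝ) < t/4)).const_mul _
    · filter_upwards [ae_ne_real 0] with k hk
      have hKx : Tendsto (fun ξ : ℝ => ξ * Kik (ξ*k) (Real.exp (-(x/ξ)))) (𝓝[>] (0:ℝ))
          (𝓝 (Real.sin (k*x)/k)) := by
        rw [← integral_Ioo_cos hx hk]
        exact tendsto_scaledKik hx k
      have hKy : Tendsto (fun ξ : ℝ => ξ * Kik (ξ*k) (Real.exp (-(y/ξ)))) (𝓝[>] (0:ℝ))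
          (𝓝 (Real.sin (k*y)/k)) := by
        rw [← integral_Ioo_cos hy hk]
        exact tendsto_scaledKik hy k
      have hsinh : Tendsto (fun ξ : ℝ => Real.sinh (Real.pi*ξ*k)/ξ) (𝓝[>] (0:ℝ))
          (𝓝 (Real.pi*k)) := by
        refine (tendsto_sinh_div (Real.pi*k)).congr fun ξ => ?_
        ring_nf
      have hg : Tendsto (fun ξ : ℝ =>
          Real.exp (-(k ^ 2 * t) / 2) * ((ξ * Kik (ξ*k) (Real.exp (-(x/ξ))))
            * (ξ * Kik (ξ*k) (Real.exp (-(y/ξ)))))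
            * (k * (Real.sinh (Real.pi*ξ*k)/ξ))) (𝓝[>] (0:ℝ))
          (𝓝 (Real.exp (-(k ^ 2 * t) / 2) * ((Real.sin (k*x)/k) * (Real.sin (k*y)/k))
            * (k * (Real.pi*k)))) :=
        (tendsto_const_nhds.mul (hKx.mul hKy)).mul (tendsto_const_nhds.mul hsinh)
      have hval : Real.exp (-(k ^ 2 * t) / 2) * ((Real.sin (k*x)/k) * (Real.sin (k*y)/k))
            * (k * (Real.pi*k))
          = Real.pi * (Real.exp (-(k ^ 2 * t) / 2) * (Real.sin (k*x) * Real.sin (k*y))) := by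
        field_simp
      rw [hval] at hg
      refine hg.congr' ?_
      filter_upwards [self_mem_nhdsWithin] with ξ hξ
      have hξ' : (0:ℝ) < ξ := hξ
      field_simp
  have hval2 : (1 / Real.pi ^ 2) * (∫ k : ℝ,
      Real.pi * (Real.exp (-(k ^ 2 * t) / 2) * (Real.sin (k*x) * Real.sin (k*y))))
      = (Real.sqrt (2 * Real.pi * t))⁻¹ *
        (Real.exp (-(x - y) ^ 2 / (2 * t)) - Real.exp (-(x + y) ^ 2 / (2 * t))) := by
    have hptw : (fun k : ℝ =>
        Real.pi * (Real.exp (-(k ^ 2 * t) / 2) * (Real.sin (k*x) * Real.sin (k*y))))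
        = fun k : ℝ => (Real.pi/2) * (Real.exp (-(k^2*t)/2) * Real.cos (k*(x-y))
          - Real.exp (-(k^2*t)/2) * Real.cos (k*(x+y))) := by
      funext k
      rw [show k*(x-y) = k*x - k*y by ring, show k*(x+y) = k*x + k*y by ring,
        Real.cos_sub, Real.cos_add]
      ring
    rw [hptw, integral_const_mul,
      integral_sub (integrable_gauss_cos ht (x-y)) (integrable_gauss_cos ht (x+y)),
      integral_gauss_cos ht (x-y), integral_gauss_cos ht (x+y)]
    have hsq : Real.sqrt (2*Real.pi/t) = Real.sqrt (2*Real.pi*t)/t := by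
      rw [show 2*Real.pi/t = (2*Real.pi*t)/t^2 by field_simp,
        Real.sqrt_div (by positivity), Real.sqrt_sq ht.le]
    rw [hsq]
    set r := Real.sqrt (2*Real.pi*t) with hr
    have hrpos : (0:ℝ) < r := Real.sqrt_pos.2 (by positivity)
    have hself : r * r = 2*Real.pi*t := Real.mul_self_sqrt (by positivity)
    have hinv : r⁻¹ = r/(2*Real.pi*t) := by
      rw [← hself, eq_div_iff (by positivity : (0:ℝ) < r*r).ne', ← mul_assoc,
        inv_mul_cancel₀ hrpos.ne', one_mul]
    rw [hinv]
    field_simp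
  have heq : (fun ξ : ℝ => Qxi ξ t y x) = fun ξ : ℝ => (1 / Real.pi ^ 2) *
      ∫ k : ℝ, Real.exp (-(k ^ 2 * t) / 2) * Kik (ξ * k) (Real.exp (-(x / ξ)))
        * Kik (ξ * k) (Real.exp (-(y / ξ))) * (ξ * k * Real.sinh (Real.pi * ξ * k)) := rfl
  rw [heq, ← hval2]
  exact hmain.const_mul (1 / Real.pi ^ 2)
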